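/- Let V be a complete discrete valuation ring with uniformiser π. Let L be a torsionfree, π-adically complete V-module and let K ⊆ L be a V-submodule such that P := L/K is torsionfree and π-adically complete; let q: L → P be the quotient map. If S ⊆ P is a V-submodule that is compactoid in P, then there exists a V-submodule S̃ ⊆ L that is compactoid in L and satisfies S ⊆ q(S̃). (Part of Proposition 4.6: the quotient map L′ → P′ of modules with the compactoid bornology is a bornological quotient map, i.e., every compactoid subset of P lifts to a compactoid subset of L.) -/

import Mathlib

open Pointwise

/-- `S` is a compactoid submodule of `M`: for every `n`, the image of `S` in
`M/πⁿM` is finitely generated, i.e. there is a finite `Fₙ ⊆ M` with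
`S ⊆ V·Fₙ + πⁿ M`. -/
def CompactoidIn {V : Type*} [CommRing V] (π : V) {M : Type*} [AddCommGroup M]
    [Module V M] (S : Submodule V M) : Prop :=
  ∀ n : ℕ, ∃ F : Finset M,
    S ≤ Submodule.span V (F : Set M) ⊔ π ^ n • (⊤ : Submodule V M)

namespace CompactoidAux

open Submodule

attribute [local instance] Classical.propDecidable

variable {V : Type*} [CommRing V] {M : Type*} [AddCommGroup M] [Module V M]

/-- A submodule contained in a finitely generated submodule over a Noetherian
ring is finitely generated. -/
lemma fg_of_le_fg [IsNoetherianRing V] {N N' : Submodule V M} (h : N ≤ N')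
    (h' : N'.FG) : N.FG := by
  haveI := isNoetherian_of_fg_of_noetherian N' h'
  have hfg : ((N.comap N'.subtype).map N'.subtype).FG :=
    (IsNoetherian.noetherian (N.comap N'.subtype)).map _
  rwa [Submodule.map_comap_subtype, inf_eq_right.mpr h] at hfg

/-- If the image of `S` in `M/W` is finitely generated, then there is a finite
subset `F` of `S` with `S ≤ span F ⊔ W`. -/
lemma exists_finset_of_fg_map (W S : Submodule V M) (h : (S.map W.mkQ).FG) :
    ∃ F : Finset M, ↑F ⊆ (S : Set M) ∧ S ≤ span V (F : Set M) ⊔ W := by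
  obtain ⟨T, hT⟩ := h
  have hmem : ∀ x : {x // x ∈ T}, ∃ s, s ∈ S ∧ W.mkQ s = (x : M ⧸ W) := by
    rintro ⟨x, hx⟩
    have : (x : M ⧸ W) ∈ S.map W.mkQ := hT ▸ subset_span hx
    simpa [Submodule.mem_map] using this
  choose σ hσS hσeq using hmem
  refine ⟨T.attach.image σ, ?_, ?_⟩
  · intro x hx
    simp only [Finset.coe_image, Set.mem_image] at hx
    obtain ⟨t, _, rfl⟩ := hx
    exact hσS t
  · intro s hs
    have h1 : W.mkQ s ∈ span V (T : Set (M ⧸ W)) := hT ▸ Submodule.mem_map_of_mem hs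
    have h2 : (T : Set (M ⧸ W)) ⊆ W.mkQ '' ↑(T.attach.image σ) := by
      intro x hx
      exact ⟨σ ⟨x, hx⟩, by simp [Finset.mem_image], hσeq ⟨x, hx⟩⟩
    have h3 : W.mkQ s ∈ span V (W.mkQ '' ↑(T.attach.image σ)) :=
      span_mono h2 h1
    rw [← Submodule.map_span] at h3
    obtain ⟨y, hy, hys⟩ := h3
    have : s - y ∈ W := by
      rw [← Submodule.ker_mkQ W, LinearMap.mem_ker, map_sub, hys, sub_self]
    exact Submodule.mem_sup.2 ⟨y, hy, s - y, this, by abel⟩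

/-- Conversely, `S ≤ span F ⊔ W` with `F` finite forces the image of `S` in
`M/W` to be finitely generated (over a Noetherian ring). -/
lemma fg_map_of_le_span_sup [IsNoetherianRing V] (W S : Submodule V M)
    (F : Finset M) (h : S ≤ span V (F : Set M) ⊔ W) : (S.map W.mkQ).FG := by
  have h1 : S.map W.mkQ ≤ span V (W.mkQ '' (F : Set M)) := by
    have := Submodule.map_mono (f := W.mkQ) h
    rw [Submodule.map_sup, Submodule.map_span] at this
    rwa [W.mkQ_map_self, sup_bot_eq] at this
  exact fg_of_le_fg h1 ⟨(F.image W.mkQ), by simp [Finset.coe_image]⟩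

/-- The preimage of a compactoid submodule under multiplication by `π` is
compactoid, provided multiplication by `π` is injective on `M`. -/
lemma compactoidIn_comap_lsmul [IsNoetherianRing V] {π : V}
    (hinj : Function.Injective (fun x : M => π • x))
    {S : Submodule V M} (hS : CompactoidIn π S) :
    CompactoidIn π (S.comap (LinearMap.lsmul V M π)) := by
  intro n
  set T := S.comap (LinearMap.lsmul V M π) with hTdef
  have hπn : (π ^ n • (⊤ : Submodule V M)) ≤
      (π ^ (n + 1) • (⊤ : Submodule V M)).comap (LinearMap.lsmul V M π) := by
    rintro x ⟨y, -, rfl⟩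
    refine ⟨y, trivial, ?_⟩
    show π ^ (n + 1) • y = π • (π ^ n • y)
    rw [smul_smul, ← pow_succ']
  set φ := Submodule.mapQ (π ^ n • (⊤ : Submodule V M))
    (π ^ (n + 1) • (⊤ : Submodule V M)) (LinearMap.lsmul V M π) hπn with hφdef
  have hφinj : Function.Injective φ := by
    rw [← LinearMap.ker_eq_bot, eq_bot_iff]
    intro a ha
    obtain ⟨x, rfl⟩ := (π ^ n • (⊤ : Submodule V M)).mkQ_surjective a
    rw [LinearMap.mem_ker] at ha
    have hφx : φ ((π ^ n • (⊤ : Submodule V M)).mkQ x)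
        = (π ^ (n + 1) • (⊤ : Submodule V M)).mkQ (π • x) := by
      simp [hφdef, Submodule.mapQ_apply, Submodule.mkQ_apply]
    rw [hφx] at ha
    have hmem : π • x ∈ π ^ (n + 1) • (⊤ : Submodule V M) := by
      rwa [Submodule.mkQ_apply, Submodule.Quotient.mk_eq_zero] at ha
    obtain ⟨y, -, hy⟩ := hmem
    have : π • (π ^ n • y) = π • x := by
      rw [smul_smul, ← pow_succ']; exact hy
    have hx : x = π ^ n • y := (hinj this).symm
    simp only [Submodule.mem_bot, Submodule.mkQ_apply, hx,
      Submodule.Quotient.mk_eq_zero]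
    exact Submodule.smul_mem_pointwise_smul y (π ^ n) ⊤ trivial
  have hmap : ((T.map (π ^ n • (⊤ : Submodule V M)).mkQ).map φ) ≤
      S.map (π ^ (n + 1) • (⊤ : Submodule V M)).mkQ := by
    calc (T.map (π ^ n • (⊤ : Submodule V M)).mkQ).map φ
        = T.map (φ.comp (π ^ n • (⊤ : Submodule V M)).mkQ) :=
          (Submodule.map_comp _ _ _).symm
      _ = T.map ((π ^ (n + 1) • (⊤ : Submodule V M)).mkQ.comp
          (LinearMap.lsmul V M π)) := by rw [Submodule.mapQ_mkQ]
      _ = (T.map (LinearMap.lsmul V M π)).map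
          (π ^ (n + 1) • (⊤ : Submodule V M)).mkQ := Submodule.map_comp _ _ _
      _ ≤ S.map _ := Submodule.map_mono (Submodule.map_comap_le _ _)
  obtain ⟨F, hF⟩ := hS (n + 1)
  have hSfg : (S.map (π ^ (n + 1) • (⊤ : Submodule V M)).mkQ).FG :=
    fg_map_of_le_span_sup _ _ F hF
  have hTfg : (T.map (π ^ n • (⊤ : Submodule V M)).mkQ).FG :=
    Submodule.fg_of_fg_map_injective φ hφinj (fg_of_le_fg hmap hSfg)
  obtain ⟨F', _, hF'⟩ := exists_finset_of_fg_map _ _ hTfg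
  exact ⟨F', hF'⟩

end CompactoidAux

/-- Part of Proposition 4.6 (`L' → P'` is a bornological quotient map): let `L` be a
torsionfree, `π`-adically complete module over a complete discrete valuation ring and
`K ⊆ L` a submodule such that `P = L/K` is torsionfree and `π`-adically complete.
Then every compactoid submodule `S` of `P` is contained in the image of a compactoid
submodule `S̃` of `L` under the quotient map. -/
theorem compactoidIn_lifts_along_quotient
    {V : Type*} [CommRing V] [IsDomain V] [IsDiscreteValuationRing V]
    (π : V) (hπ : Irreducible π) [IsAdicComplete (Ideal.span {π}) V]
    {L : Type*} [AddCommGroup L] [Module V L]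
    (htfL : Function.Injective (fun x : L => π • x))
    [IsAdicComplete (Ideal.span {π}) L]
    (K : Submodule V L)
    (htfP : Function.Injective (fun x : L ⧸ K => π • x))
    [IsAdicComplete (Ideal.span {π}) (L ⧸ K)]
    (S : Submodule V (L ⧸ K)) (hS : CompactoidIn π S) :
    ∃ St : Submodule V L, CompactoidIn π St ∧ S ≤ St.map K.mkQ := by
  classical
  open Submodule CompactoidAux in
  set P := L ⧸ K
  -- the ideal powers are the pointwise powers
  have hIsmul : ∀ (n : ℕ) (M : Type _) [AddCommGroup M] [Module V M],
      ((Ideal.span {π}) ^ n • (⊤ : Submodule V M)) = π ^ n • (⊤ : Submodule V M) := by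
    intro n M _ _
    rw [Ideal.span_singleton_pow, Submodule.ideal_span_singleton_smul]
  -- the chain of compactoid submodules Sseq k = π⁻ᵏ S
  set Sseq : ℕ → Submodule V P :=
    fun k => Nat.rec S (fun _ T => T.comap (LinearMap.lsmul V P π)) k with hSseq
  have hSseq0 : Sseq 0 = S := rfl
  have hSseqsucc : ∀ k, Sseq (k + 1) = (Sseq k).comap (LinearMap.lsmul V P π) :=
    fun k => rfl
  have hcomp : ∀ k, CompactoidIn π (Sseq k) := by
    intro k
    induction k with
    | zero => exact hS
    | succ k ih => exact CompactoidAux.compactoidIn_comap_lsmul htfP ih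
  -- choose finite subsets Fs k ⊆ Sseq k with Sseq k ≤ span (Fs k) ⊔ πP
  have hFs : ∀ k, ∃ F : Finset P, ↑F ⊆ (Sseq k : Set P) ∧
      Sseq k ≤ Submodule.span V (F : Set P) ⊔ π ^ 1 • (⊤ : Submodule V P) := by
    intro k
    obtain ⟨F, hF⟩ := hcomp k 1
    exact CompactoidAux.exists_finset_of_fg_map _ _
      (CompactoidAux.fg_map_of_le_span_sup _ _ F hF)
  choose Fs hFsub hFle using hFs
  -- lift the finite sets to L
  have hmkQsurj : Function.Surjective K.mkQ := Submodule.mkQ_surjective K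
  set σ : P → L := Function.surjInv hmkQsurj with hσ
  have hσeq : ∀ p : P, K.mkQ (σ p) = p := Function.surjInv_eq hmkQsurj
  set G : ℕ → Finset L := fun k => (Fs k).image σ with hG
  have hGspan : ∀ k, (Submodule.span V ((G k : Set L))).map K.mkQ
      = Submodule.span V ((Fs k : Set P)) := by
    intro k
    rw [Submodule.map_span]
    congr 1
    ext p
    constructor
    · rintro ⟨x, hx, rfl⟩
      simp only [hG, Finset.coe_image, Set.mem_image] at hx
      obtain ⟨q, hq, rfl⟩ := hx
      rw [hσeq]; exact hq
    · intro hp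
      exact ⟨σ p, by simp [hG, Finset.coe_image]; exact ⟨p, hp, rfl⟩, hσeq p⟩
  -- the candidate compactoid submodule of L
  set B : ℕ → Finset L := fun n =>
    (Finset.range n).biUnion (fun k => (G k).image (fun x => π ^ k • x)) with hB
  set St : Submodule V L :=
    ⨅ n : ℕ, (Submodule.span V ((B n : Set L)) ⊔ π ^ n • (⊤ : Submodule V L))
    with hSt
  refine ⟨St, ?_, ?_⟩
  · intro n
    exact ⟨B n, iInf_le _ n⟩
  -- main part: S ≤ St.map K.mkQ
  intro s hs
  -- decompose elements of Sseq k
  have step : ∀ k, ∀ p : {x : P // x ∈ Sseq k},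
      ∃ y p', y ∈ Submodule.span V ((Fs k : Set P)) ∧ p' ∈ Sseq (k + 1) ∧
        (p : P) = y + π • p' := by
    rintro k ⟨p, hp⟩
    obtain ⟨y, hy, z, hz, hyz⟩ := Submodule.mem_sup.1 (hFle k hp)
    obtain ⟨w, -, hw⟩ := hz
    have hw' : π • w = z := by
      have h1 : π ^ 1 • w = z := hw
      rwa [pow_one] at h1
    have hySk : y ∈ Sseq k := Submodule.span_le.2 (hFsub k) hy
    have hπw : π • w ∈ Sseq k := by
      have h2 : π • w = p - y := hw'.trans (eq_sub_of_add_eq' hyz)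
      rw [h2]; exact Submodule.sub_mem _ hp hySk
    refine ⟨y, w, hy, ?_, by rw [hw']; exact hyz.symm⟩
    rw [hSseqsucc k]
    exact hπw
  choose yf pf hyf hpf heqf using step
  -- the sequence of remainders
  set t : ∀ k : ℕ, {x : P // x ∈ Sseq k} :=
    fun k => Nat.rec (⟨s, hs⟩ : {x : P // x ∈ Sseq 0})
      (fun k tk => ⟨pf k tk, hpf k tk⟩) k with ht
  have ht0 : (t 0 : P) = s := rfl
  have htsucc : ∀ k, (t k : P) = yf k (t k) + π • (t (k + 1) : P) := fun k => heqf k (t k)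
  -- lift yf to span (G k)
  have hxex : ∀ k, ∃ x : L, x ∈ Submodule.span V ((G k : Set L)) ∧
      K.mkQ x = yf k (t k) := by
    intro k
    have : yf k (t k) ∈ (Submodule.span V ((G k : Set L))).map K.mkQ := by
      rw [hGspan k]; exact hyf k (t k)
    obtain ⟨x, hx, hxe⟩ := this
    exact ⟨x, hx, hxe⟩
  choose x hxspan hxmk using hxex
  -- partial sums
  set u : ℕ → L := fun n => ∑ k ∈ Finset.range n, π ^ k • x k with hu
  -- Cauchy
  have hcauchy : ∀ {m n : ℕ}, m ≤ n →
      u m ≡ u n [SMOD ((Ideal.span {π}) ^ m • (⊤ : Submodule V L))] := by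
    intro m n hmn
    rw [SModEq.sub_mem, hIsmul m L]
    have : u n - u m = ∑ k ∈ Finset.Ico m n, π ^ k • x k := by
      simp only [hu]
      rw [← Finset.sum_range_add_sum_Ico _ hmn]
      abel
    have hmem : ∑ k ∈ Finset.Ico m n, π ^ k • x k ∈ π ^ m • (⊤ : Submodule V L) := by
      refine Submodule.sum_mem _ ?_
      intro k hk
      have hkm : m ≤ k := (Finset.mem_Ico.1 hk).1
      refine ⟨π ^ (k - m) • x k, trivial, ?_⟩
      show π ^ m • π ^ (k - m) • x k = π ^ k • x k
      rw [smul_smul, ← pow_add, Nat.add_sub_cancel' hkm]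
    have : u m - u n = -(∑ k ∈ Finset.Ico m n, π ^ k • x k) := by rw [← this]; abel
    rw [this]
    exact Submodule.neg_mem _ hmem
  obtain ⟨g, hg⟩ := IsPrecomplete.prec (IsAdicComplete.toIsPrecomplete
    (I := Ideal.span {π}) (M := L)) hcauchy
  have hg' : ∀ n, g - u n ∈ π ^ n • (⊤ : Submodule V L) := by
    intro n
    have := (hg n)
    rw [SModEq.sub_mem, hIsmul n L] at this
    have h2 : g - u n = -(u n - g) := by abel
    rw [h2]; exact Submodule.neg_mem _ this
  -- g lies in St
  have hgSt : g ∈ St := by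
    rw [hSt, Submodule.mem_iInf]
    intro n
    have hun : u n ∈ Submodule.span V ((B n : Set L)) := by
      refine Submodule.sum_mem _ ?_
      intro k hk
      have hxk : π ^ k • x k ∈ π ^ k • Submodule.span V ((G k : Set L)) :=
        Submodule.smul_mem_pointwise_smul _ _ _ (hxspan k)
      rw [Submodule.smul_span] at hxk
      refine Submodule.span_mono ?_ hxk
      intro z hz
      obtain ⟨w, hw, rfl⟩ := hz
      simp only [hB, Finset.coe_biUnion, Finset.coe_image, Set.mem_iUnion]
      exact ⟨k, by simpa using Finset.mem_range.2 (Finset.mem_range.1 hk), w, hw, rfl⟩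
    have : g = u n + (g - u n) := by abel
    rw [this]
    exact Submodule.add_mem _ (Submodule.mem_sup_left hun)
      (Submodule.mem_sup_right (hg' n))
  refine ⟨g, hgSt, ?_⟩
  -- telescoping: s - mkQ (u n) = π ^ n • t n
  have htel : ∀ n, s - K.mkQ (u n) = π ^ n • (t n : P) := by
    intro n
    induction n with
    | zero => simp [hu, ht0]
    | succ n ih =>
      have hun1 : u (n + 1) = u n + π ^ n • x n := by
        rw [hu]; exact Finset.sum_range_succ _ n
      rw [hun1, map_add, map_smul, hxmk]
      have : s - (K.mkQ (u n) + π ^ n • yf n (t n))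
          = (s - K.mkQ (u n)) - π ^ n • yf n (t n) := by abel
      rw [this, ih, ← smul_sub]
      have h2 : (t n : P) - yf n (t n) = π • (t (n + 1) : P) := by
        rw [htsucc n]; abel
      rw [h2, smul_smul, ← pow_succ]
  -- conclude mkQ g = s
  have hfin : K.mkQ g = s := by
    have hzero : ∀ n : ℕ, K.mkQ g - s ≡ 0
        [SMOD ((Ideal.span {π}) ^ n • (⊤ : Submodule V P))] := by
      intro n
      rw [SModEq.sub_mem, sub_zero, hIsmul n P]
      have h1 : K.mkQ g - K.mkQ (u n) ∈ π ^ n • (⊤ : Submodule V P) := by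
        obtain ⟨w, -, hw⟩ := hg' n
        have hw2 : π ^ n • w = g - u n := hw
        refine ⟨K.mkQ w, trivial, ?_⟩
        show π ^ n • K.mkQ w = K.mkQ g - K.mkQ (u n)
        rw [← map_smul, hw2, map_sub]
      have h2 : K.mkQ g - s = (K.mkQ g - K.mkQ (u n)) - (s - K.mkQ (u n)) := by abel
      rw [h2, htel n]
      exact Submodule.sub_mem _ h1
        (Submodule.smul_mem_pointwise_smul _ _ _ trivial)
    have h0 := IsHausdorff.haus (IsAdicComplete.toIsHausdorff
      (I := Ideal.span {π}) (M := P)) (K.mkQ g - s) hzero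
    exact sub_eq_zero.mp h0
  exact hfin
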